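/- Let R be a commutative ring, M an n×m matrix, and N an n'×m' matrix over R. Then for the block diagonal matrix M ⊕ N, the determinantal ideal satisfies I_k(M ⊕ N) = ∑_{i+j=k} I_i(M) · I_j(N). -/

import Mathlib

/-- The determinantal ideal `I_k(M)` generated by all `k × k` minors of a matrix `M`
(with the convention `I_0 = R`). -/
def detIdeal {R : Type*} [CommRing R] {ι κ : Type*} (k : ℕ) (M : Matrix ι κ R) : Ideal R :=
  Ideal.span {x | ∃ (f : Fin k → ι) (g : Fin k → κ), x = ((M.submatrix f g).det)}

lemma det_eq_zero_of_zero_block {R : Type*} [CommRing R] {n : Type*} [Fintype n] [DecidableEq n]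
    (X : Matrix n n R) (S T : Finset n) (h : Fintype.card n < S.card + T.card)
    (hz : ∀ s ∈ S, ∀ t ∈ T, X s t = 0) : X.det = 0 := by
  rw [Matrix.det_apply]
  refine Finset.sum_eq_zero fun σ _ => ?_
  have : ∃ t ∈ T, σ t ∈ S := by
    by_contra hc
    push_neg at hc
    have hsub : T.image σ ⊆ Sᶜ := by
      intro x hx
      obtain ⟨t, ht, rfl⟩ := Finset.mem_image.mp hx
      exact Finset.mem_compl.mpr (hc t ht)
    have h1 := Finset.card_le_card hsub
    rw [Finset.card_image_of_injective _ σ.injective, Finset.card_compl] at h1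
    have h2 := Finset.card_le_univ S
    have h3 := Finset.card_le_univ T
    omega
  obtain ⟨t, ht, hts⟩ := this
  rw [show (∏ i, X (σ i) i) = 0 from Finset.prod_eq_zero (Finset.mem_univ t) (hz _ hts _ ht),
    smul_zero]

theorem detIdeal_blockDiagonal {R : Type*} [CommRing R] {ι₁ κ₁ ι₂ κ₂ : Type*} (k : ℕ)
    (M : Matrix ι₁ κ₁ R) (N : Matrix ι₂ κ₂ R) :
    detIdeal k (Matrix.fromBlocks M 0 0 N) =
      ∑ i ∈ Finset.range (k + 1), detIdeal i M * detIdeal (k - i) N := by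
  apply le_antisymm
  · -- hard direction
    rw [detIdeal, Ideal.span_le]
    rintro x ⟨f, g, rfl⟩
    set S : Finset (Fin k) := Finset.univ.filter (fun a => (f a).isLeft) with hS
    set T : Finset (Fin k) := Finset.univ.filter (fun b => (g b).isLeft) with hT
    have hSk : S.card ≤ k := le_trans (Finset.card_le_card (Finset.subset_univ S)) (by simp)
    have hScard : Sᶜ.card = k - S.card := by
      rw [Finset.card_compl]; simp
    have hTcard : Tᶜ.card = k - T.card := by
      rw [Finset.card_compl]; simp
    by_cases hij : S.card = T.card
    · -- equal case
      set i := S.card with hi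
      -- build equivalences
      let e₁ : Fin i ⊕ Fin (k - i) ≃ Fin k :=
        ((finCongr rfl).sumCongr (finCongr hScard.symm)).trans
          ((S.equivFin.symm.sumCongr
              ((Sᶜ.equivFin.symm).trans (Equiv.subtypeEquivRight (fun x => Finset.mem_compl)))).trans
            (Equiv.sumCompl (· ∈ S)))
      let e₂ : Fin i ⊕ Fin (k - i) ≃ Fin k :=
        ((finCongr hij).sumCongr (finCongr (hij ▸ hTcard.symm))).trans
          ((T.equivFin.symm.sumCongr
              ((Tᶜ.equivFin.symm).trans (Equiv.subtypeEquivRight (fun x => Finset.mem_compl)))).trans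
            (Equiv.sumCompl (· ∈ T)))
      have he₁l : ∀ a, (f (e₁ (Sum.inl a))).isLeft := by
        intro a
        have : e₁ (Sum.inl a) ∈ S := by
          simp only [e₁, Equiv.trans_apply, Equiv.sumCongr_apply, Sum.map_inl,
            Equiv.sumCompl_apply_inl]
          exact Finset.coe_mem _
        simpa [hS] using this
      have he₁r : ∀ a, (f (e₁ (Sum.inr a))).isRight := by
        intro a
        have hmem : e₁ (Sum.inr a) ∉ S := by
          simp only [e₁, Equiv.trans_apply, Equiv.sumCongr_apply, Sum.map_inr,
            Equiv.sumCompl_apply_inr]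
          exact (Equiv.subtypeEquivRight (fun x => Finset.mem_compl) (Sᶜ.equivFin.symm _)).2
        rw [← Sum.not_isLeft]
        simpa [hS] using hmem
      have he₂l : ∀ a, (g (e₂ (Sum.inl a))).isLeft := by
        intro a
        have : e₂ (Sum.inl a) ∈ T := by
          simp only [e₂, Equiv.trans_apply, Equiv.sumCongr_apply, Sum.map_inl,
            Equiv.sumCompl_apply_inl]
          exact Finset.coe_mem _
        simpa [hT] using this
      have he₂r : ∀ a, (g (e₂ (Sum.inr a))).isRight := by
        intro a
        have hmem : e₂ (Sum.inr a) ∉ T := by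
          simp only [e₂, Equiv.trans_apply, Equiv.sumCongr_apply, Sum.map_inr,
            Equiv.sumCompl_apply_inr]
          exact (Equiv.subtypeEquivRight (fun x => Finset.mem_compl) (Tᶜ.equivFin.symm _)).2
        rw [← Sum.not_isLeft]
        simpa [hT] using hmem
      let f₁ : Fin i → ι₁ := fun a => (f (e₁ (Sum.inl a))).getLeft (he₁l a)
      let f₂ : Fin (k - i) → ι₂ := fun a => (f (e₁ (Sum.inr a))).getRight (he₁r a)
      let g₁ : Fin i → κ₁ := fun b => (g (e₂ (Sum.inl b))).getLeft (he₂l b)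
      let g₂ : Fin (k - i) → κ₂ := fun b => (g (e₂ (Sum.inr b))).getRight (he₂r b)
      have hZ : ((Matrix.fromBlocks M 0 0 N).submatrix f g).submatrix e₁ e₂ =
          Matrix.fromBlocks (M.submatrix f₁ g₁) 0 0 (N.submatrix f₂ g₂) := by
        ext a b
        cases a with
        | inl a =>
          cases b with
          | inl b =>
            simp only [Matrix.submatrix_apply, Matrix.fromBlocks_apply₁₁]
            rw [← Sum.inl_getLeft (f (e₁ (Sum.inl a))) (he₁l a),
              ← Sum.inl_getLeft (g (e₂ (Sum.inl b))) (he₂l b)]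
            rfl
          | inr b =>
            simp only [Matrix.submatrix_apply, Matrix.fromBlocks_apply₁₂]
            rw [← Sum.inl_getLeft (f (e₁ (Sum.inl a))) (he₁l a),
              ← Sum.inr_getRight (g (e₂ (Sum.inr b))) (he₂r b)]
            rfl
        | inr a =>
          cases b with
          | inl b =>
            simp only [Matrix.submatrix_apply, Matrix.fromBlocks_apply₂₁]
            rw [← Sum.inr_getRight (f (e₁ (Sum.inr a))) (he₁r a),
              ← Sum.inl_getLeft (g (e₂ (Sum.inl b))) (he₂l b)]
            rfl
          | inr b =>
            simp only [Matrix.submatrix_apply, Matrix.fromBlocks_apply₂₂]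
            rw [← Sum.inr_getRight (f (e₁ (Sum.inr a))) (he₁r a),
              ← Sum.inr_getRight (g (e₂ (Sum.inr b))) (he₂r b)]
            rfl
      -- relate determinants
      set X := (Matrix.fromBlocks M 0 0 N).submatrix f g with hX
      set π : Equiv.Perm (Fin k) := e₁.symm.trans e₂ with hπ
      have hdet : X.submatrix e₁ e₂ = (X.submatrix id π).submatrix e₁ e₁ := by
        ext a b
        simp [hπ, Matrix.submatrix_apply]
      have h1 : (X.submatrix e₁ e₂).det = Equiv.Perm.sign π * X.det := by
        rw [hdet, Matrix.det_submatrix_equiv_self, Matrix.det_permute']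
      have hsq : ((Equiv.Perm.sign π : ℤ) : R) * ((Equiv.Perm.sign π : ℤ) : R) = 1 := by
        rw [← Int.cast_mul, ← Units.val_mul, Int.units_mul_self, Units.val_one, Int.cast_one]
      have h2 : X.det = Equiv.Perm.sign π * (X.submatrix e₁ e₂).det := by
        rw [h1, ← mul_assoc, hsq, one_mul]
      rw [h2, hZ, Matrix.det_fromBlocks_zero₂₁]
      have hik : i ∈ Finset.range (k + 1) := Finset.mem_range.mpr (by omega)
      have hle : detIdeal i M * detIdeal (k - i) N ≤
          ∑ j ∈ Finset.range (k + 1), detIdeal j M * detIdeal (k - j) N :=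
        Finset.single_le_sum (f := fun j => detIdeal j M * detIdeal (k - j) N)
          (fun j _ => zero_le) hik
      exact Ideal.mul_mem_left _ _ (hle (Ideal.mul_mem_mul
        (Ideal.subset_span ⟨f₁, g₁, rfl⟩) (Ideal.subset_span ⟨f₂, g₂, rfl⟩)))
    · -- unequal case: determinant is zero
      have hzero : ((Matrix.fromBlocks M 0 0 N).submatrix f g).det = 0 := by
        rcases lt_or_gt_of_ne hij with hlt | hgt
        · refine det_eq_zero_of_zero_block _ Sᶜ T ?_ ?_
          · simp only [hScard]
            have := Finset.card_le_card (Finset.subset_univ T)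
            simp only [Finset.card_univ, Fintype.card_fin] at *
            omega
          · intro s hs t ht
            rw [Finset.mem_compl, hS] at hs
            rw [hT] at ht
            simp only [Finset.mem_filter, Finset.mem_univ, true_and] at hs ht
            rw [Sum.not_isLeft] at hs
            obtain ⟨u, hu⟩ := Sum.isRight_iff.mp hs
            obtain ⟨v, hv⟩ := Sum.isLeft_iff.mp ht
            simp [Matrix.submatrix_apply, hu, hv]
        · refine det_eq_zero_of_zero_block _ S Tᶜ ?_ ?_
          · simp only [hTcard]
            have := Finset.card_le_card (Finset.subset_univ T)
            simp only [Finset.card_univ, Fintype.card_fin] at *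
            omega
          · intro s hs t ht
            rw [hS] at hs
            rw [Finset.mem_compl, hT] at ht
            simp only [Finset.mem_filter, Finset.mem_univ, true_and] at hs ht
            rw [Sum.not_isLeft] at ht
            obtain ⟨u, hu⟩ := Sum.isLeft_iff.mp hs
            obtain ⟨v, hv⟩ := Sum.isRight_iff.mp ht
            simp [Matrix.submatrix_apply, hu, hv]
      rw [hzero]
      exact Ideal.zero_mem _
  · -- easy direction
    refine Finset.sum_induction _ (fun J => J ≤ detIdeal k (Matrix.fromBlocks M 0 0 N))
      (fun a b ha hb => by rw [Submodule.add_eq_sup]; exact sup_le ha hb)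
      (by simp) ?_
    intro i hi
    rw [Finset.mem_range] at hi
    have hik : i ≤ k := by omega
    rw [detIdeal, detIdeal, Ideal.span_mul_span, Ideal.span_le]
    rintro x hx
    rw [Set.mem_mul] at hx
    obtain ⟨a, ha, b, hb, rfl⟩ := hx
    obtain ⟨f₁, g₁, rfl⟩ := ha
    obtain ⟨f₂, g₂, rfl⟩ := hb
    let e : Fin i ⊕ Fin (k - i) ≃ Fin k := finSumFinEquiv.trans (finCongr (by omega))
    refine Ideal.subset_span ⟨Sum.elim (Sum.inl ∘ f₁) (Sum.inr ∘ f₂) ∘ e.symm,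
      Sum.elim (Sum.inl ∘ g₁) (Sum.inr ∘ g₂) ∘ e.symm, ?_⟩
    have : (Matrix.fromBlocks M 0 0 N).submatrix
        (Sum.elim (Sum.inl ∘ f₁) (Sum.inr ∘ f₂) ∘ ⇑e.symm)
        (Sum.elim (Sum.inl ∘ g₁) (Sum.inr ∘ g₂) ∘ ⇑e.symm) =
        (Matrix.fromBlocks (M.submatrix f₁ g₁) 0 0 (N.submatrix f₂ g₂)).submatrix e.symm e.symm := by
      ext a b
      rcases h1 : e.symm a with a' | a' <;> rcases h2 : e.symm b with b' | b' <;>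
        simp [Matrix.submatrix_apply, h1, h2]
    rw [this, Matrix.det_submatrix_equiv_self, Matrix.det_fromBlocks_zero₂₁]
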